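/- Let n ≥ 3 and let F be n-completely mixable with mean 0 and finite positive variance. A random vector (X_1,...,X_n) with all marginals F minimizes max_{K⊆[n]} E[(∑_{i∈K} X_i)²] if and only if it is an NCD joint mix with correlation matrix P_n* (all pairwise correlations equal to −1/(n−1)). -/

import Mathlib

open MeasureTheory ProbabilityTheory

noncomputable def cov {Ω : Type*} [MeasurableSpace Ω] (P : Measure Ω) (X Y : Ω → ℝ) : ℝ :=
  ∫ ω, (X ω - ∫ x, X x ∂P) * (Y ω - ∫ x, Y x ∂P) ∂P

open scoped ENNReal


noncomputable def Vc {n : ℕ} (c : Fin n → Fin n → ℝ) (K : Finset (Fin n)) : ℝ :=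
  ∑ i ∈ K, ∑ j ∈ K, c i j

/-- the target optimal value -/
noncomputable def vstar (n : ℕ) (v : ℝ) : ℝ :=
  ((n - n/2 : ℕ) : ℝ) * ((n/2 : ℕ) : ℝ) * v / ((n : ℝ) - 1)

lemma perm_pair_sum_eq {n : ℕ} (c : Fin n → Fin n → ℝ) {i j a b : Fin n}
    (hij : i ≠ j) (hab : a ≠ b) :
    ∑ π : Equiv.Perm (Fin n), c (π i) (π j) = ∑ π : Equiv.Perm (Fin n), c (π a) (π b) := by
  obtain ⟨τ, ha, hb⟩ : ∃ τ : Equiv.Perm (Fin n), τ a = i ∧ τ b = j := by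
    refine ⟨(Equiv.swap ((Equiv.swap a i) b) j) * (Equiv.swap a i), ?_, ?_⟩
    · have h1 : (Equiv.swap a i) a = i := Equiv.swap_apply_left a i
      have h2 : ((Equiv.swap a i) b) ≠ i := by
        intro h
        exact hab (Equiv.injective _ (h.trans h1.symm)).symm
      simp only [Equiv.Perm.mul_apply, h1]
      exact Equiv.swap_apply_of_ne_of_ne (Ne.symm h2) hij
    · simp only [Equiv.Perm.mul_apply]
      exact Equiv.swap_apply_left _ _
  calc ∑ π : Equiv.Perm (Fin n), c (π i) (π j)
      = ∑ π : Equiv.Perm (Fin n), (fun σ : Equiv.Perm (Fin n) => c (σ a) (σ b)) (π * τ) := by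
        apply Finset.sum_congr rfl; intro π _
        simp [Equiv.Perm.mul_apply, ha, hb]
    _ = ∑ π : Equiv.Perm (Fin n), c (π a) (π b) :=
        Equiv.sum_comp (Equiv.mulRight τ) (fun σ : Equiv.Perm (Fin n) => c (σ a) (σ b))

lemma Vc_univ_perm {n : ℕ} (c : Fin n → Fin n → ℝ) (π : Equiv.Perm (Fin n)) :
    ∑ p : Fin n, ∑ q : Fin n, c (π p) (π q) = Vc c Finset.univ := by
  unfold Vc
  rw [← Equiv.sum_comp π (fun p => ∑ q : Fin n, c p q)]
  exact Finset.sum_congr rfl fun p _ => Equiv.sum_comp π (fun q => c (π p) q)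

lemma sum_perm_offdiag {n : ℕ} (c : Fin n → Fin n → ℝ) (v : ℝ) (hd : ∀ p, c p p = v)
    {i j : Fin n} (hij : i ≠ j) :
    ((n : ℝ) * ((n : ℝ) - 1)) * ∑ π : Equiv.Perm (Fin n), c (π i) (π j) =
      (Fintype.card (Equiv.Perm (Fin n)) : ℝ) * (Vc c Finset.univ - n * v) := by
  have hn1 : 1 ≤ n := i.pos
  set h : Fin n → Fin n → ℝ := fun p q => ∑ π : Equiv.Perm (Fin n), c (π p) (π q) with hh
  have key : ∑ p : Fin n, ∑ q ∈ Finset.univ.erase p, h p q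
      = (n : ℝ) * ((n : ℝ) - 1) * h i j := by
    have : ∀ p : Fin n, ∀ q ∈ Finset.univ.erase p, h p q = h i j := by
      intro p q hq
      exact perm_pair_sum_eq c (Finset.ne_of_mem_erase hq).symm hij
    calc ∑ p : Fin n, ∑ q ∈ Finset.univ.erase p, h p q
        = ∑ p : Fin n, ∑ _q ∈ Finset.univ.erase p, h i j :=
          Finset.sum_congr rfl fun p _ => Finset.sum_congr rfl fun q hq => this p q hq
      _ = ∑ _p : Fin n, ((n - 1 : ℕ) : ℝ) * h i j := by
          apply Finset.sum_congr rfl; intro p _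
          rw [Finset.sum_const, Finset.card_erase_of_mem (Finset.mem_univ p)]
          simp [nsmul_eq_mul]
      _ = (n : ℝ) * ((n : ℝ) - 1) * h i j := by
          rw [Finset.sum_const]
          simp only [Finset.card_univ, Fintype.card_fin, nsmul_eq_mul]
          push_cast [Nat.cast_sub hn1]
          ring
  have key2 : ∑ p : Fin n, ∑ q ∈ Finset.univ.erase p, h p q
      = (Fintype.card (Equiv.Perm (Fin n)) : ℝ) * (Vc c Finset.univ - n * v) := by
    have swap1 : ∑ p : Fin n, ∑ q ∈ Finset.univ.erase p, h p q
        = ∑ π : Equiv.Perm (Fin n), ∑ p : Fin n, ∑ q ∈ Finset.univ.erase p, c (π p) (π q) := by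
      simp only [hh]
      rw [Finset.sum_comm]
      apply Finset.sum_congr rfl; intro p _
      rw [Finset.sum_comm]
    rw [swap1]
    have inner : ∀ π : Equiv.Perm (Fin n),
        ∑ p : Fin n, ∑ q ∈ Finset.univ.erase p, c (π p) (π q)
          = Vc c Finset.univ - n * v := by
      intro π
      have : ∀ p : Fin n, ∑ q ∈ Finset.univ.erase p, c (π p) (π q)
          = (∑ q : Fin n, c (π p) (π q)) - v := by
        intro p
        rw [Finset.sum_erase_eq_sub (Finset.mem_univ p), hd]
      rw [Finset.sum_congr rfl fun p _ => this p, Finset.sum_sub_distrib,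
        Vc_univ_perm c π, Finset.sum_const]
      simp only [Finset.card_univ, Fintype.card_fin, nsmul_eq_mul]
    rw [Finset.sum_congr rfl fun π _ => inner π, Finset.sum_const]
    simp [nsmul_eq_mul]
  rw [← key, key2]

lemma Vc_image {n : ℕ} (c : Fin n → Fin n → ℝ) (K : Finset (Fin n)) (π : Equiv.Perm (Fin n)) :
    Vc c (K.image π) = ∑ i ∈ K, ∑ j ∈ K, c (π i) (π j) := by
  unfold Vc
  rw [Finset.sum_image (fun a _ b _ h => π.injective h)]
  exact Finset.sum_congr rfl fun i _ =>
    Finset.sum_image (fun a _ b _ h => π.injective h)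

lemma sum_perm_Vc {n : ℕ} (c : Fin n → Fin n → ℝ) (v : ℝ) (hd : ∀ p, c p p = v)
    (K : Finset (Fin n)) :
    ((n : ℝ) * ((n : ℝ) - 1)) * ∑ π : Equiv.Perm (Fin n), Vc c (K.image π) =
      (Fintype.card (Equiv.Perm (Fin n)) : ℝ) *
        ((n : ℝ) * ((n : ℝ) - 1) * K.card * v
          + (K.card : ℝ) * ((K.card : ℝ) - 1) * (Vc c Finset.univ - n * v)) := by
  classical
  set N : ℝ := (Fintype.card (Equiv.Perm (Fin n)) : ℝ) with hN
  set h : Fin n → Fin n → ℝ := fun p q => ∑ π : Equiv.Perm (Fin n), c (π p) (π q) with hh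
  have hswap : ∑ π : Equiv.Perm (Fin n), Vc c (K.image π) = ∑ i ∈ K, ∑ j ∈ K, h i j := by
    rw [Finset.sum_congr rfl fun π _ => Vc_image c K π]
    rw [Finset.sum_comm]
    exact Finset.sum_congr rfl fun i _ => Finset.sum_comm
  have hdiag : ∀ i, h i i = N * v := by
    intro i
    simp only [hh]
    rw [Finset.sum_congr rfl fun π _ => hd (π i), Finset.sum_const]
    simp [nsmul_eq_mul, hN]
  have hoff : ∀ i j : Fin n, i ≠ j →
      ((n : ℝ) * ((n : ℝ) - 1)) * h i j = N * (Vc c Finset.univ - n * v) :=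
    fun i j hij => sum_perm_offdiag c v hd hij
  rw [hswap, Finset.mul_sum]
  have hrow : ∀ i ∈ K, ((n : ℝ) * ((n : ℝ) - 1)) * ∑ j ∈ K, h i j
      = (n : ℝ) * ((n : ℝ) - 1) * (N * v)
        + ((K.card : ℝ) - 1) * (N * (Vc c Finset.univ - n * v)) := by
    intro i hi
    rw [← Finset.add_sum_erase _ _ hi, mul_add, hdiag i, Finset.mul_sum]
    congr 1
    rw [Finset.sum_congr rfl (fun j hj => hoff i j (Finset.ne_of_mem_erase hj).symm),
      Finset.sum_const, Finset.card_erase_of_mem hi, nsmul_eq_mul]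
    congr 1
    have : 1 ≤ K.card := Finset.card_pos.mpr ⟨i, hi⟩
    push_cast [Nat.cast_sub this]
    ring
  rw [Finset.sum_congr rfl hrow, Finset.sum_const, nsmul_eq_mul]
  ring

lemma nat_prod_le (n k : ℕ) (hk : k ≤ n) : k * (n - k) ≤ (n - n/2) * (n/2) := by
  set m := n/2 with hm
  have h1 : 2*m ≤ n := by omega
  have h2 : n ≤ 2*m + 1 := by omega
  have h3 : m ≤ n := by omega
  zify [hk, h3]
  have h1' : 2*(m:ℤ) ≤ n := by exact_mod_cast h1
  have h2' : (n:ℤ) ≤ 2*m + 1 := by exact_mod_cast h2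
  have hk' : (k:ℤ) ≤ n := by exact_mod_cast hk
  rcases le_or_gt (k : ℤ) (m : ℤ) with h | h
  · nlinarith [mul_nonneg (sub_nonneg.2 h) (by linarith : (0:ℤ) ≤ (n:ℤ) - m - k)]
  · have hk1 : (m:ℤ) + 1 ≤ k := h
    nlinarith [mul_nonneg (by linarith : (0:ℤ) ≤ (k:ℤ) - m) (by linarith : (0:ℤ) ≤ (k:ℤ) - n + m)]

lemma prod_le_real (n k : ℕ) (hk : k ≤ n) :
    (k : ℝ) * ((n : ℝ) - k) ≤ ((n - n/2 : ℕ) : ℝ) * ((n/2 : ℕ) : ℝ) := by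
  have := nat_prod_le n k hk
  have hcast : ((k * (n-k) : ℕ) : ℝ) ≤ (((n - n/2) * (n/2) : ℕ) : ℝ) := Nat.cast_le.mpr this
  push_cast [Nat.cast_sub hk] at hcast
  push_cast
  linarith

/-- if all covariances equal `-v/(n-1)` then every subset-sum-variance is `≤ vstar`. -/
lemma valueUB {n : ℕ} (hn : 3 ≤ n) (c : Fin n → Fin n → ℝ) (v : ℝ) (hv : 0 ≤ v)
    (hd : ∀ p, c p p = v) (hoff : ∀ i j, i ≠ j → c i j = -v / ((n : ℝ) - 1)) :
    ∀ K : Finset (Fin n), Vc c K ≤ vstar n v := by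
  intro K
  have hn1 : (1 : ℝ) < (n : ℝ) := by exact_mod_cast by omega
  have hVK : Vc c K = (K.card : ℝ) * v + (K.card : ℝ) * ((K.card : ℝ) - 1) * (-v / ((n:ℝ)-1)) := by
    unfold Vc
    have hrow : ∀ i ∈ K, ∑ j ∈ K, c i j = v + ((K.card : ℝ) - 1) * (-v / ((n:ℝ)-1)) := by
      intro i hi
      rw [← Finset.add_sum_erase _ _ hi, hd,
        Finset.sum_congr rfl (fun j hj => hoff i j (Finset.ne_of_mem_erase hj).symm),
        Finset.sum_const, Finset.card_erase_of_mem hi, nsmul_eq_mul]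
      have : 1 ≤ K.card := Finset.card_pos.mpr ⟨i, hi⟩
      push_cast [Nat.cast_sub this]
      ring
    rw [Finset.sum_congr rfl hrow, Finset.sum_const, nsmul_eq_mul]
    ring
  rw [hVK]
  unfold vstar
  have hpos : (0:ℝ) < (n:ℝ) - 1 := by linarith
  rw [le_div_iff₀ hpos]
  have hkn : K.card ≤ n := by
    have := Finset.card_le_univ K
    simpa [Finset.card_univ] using this
  have key := prod_le_real n K.card hkn
  have expand : ((K.card:ℝ) * v + (K.card:ℝ) * ((K.card:ℝ) - 1) * (-v / ((n:ℝ)-1))) * ((n:ℝ)-1)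
      = (K.card:ℝ) * ((n:ℝ) - (K.card:ℝ)) * v := by
    field_simp
    ring
  rw [expand]
  calc (K.card:ℝ) * ((n:ℝ) - (K.card:ℝ)) * v
      ≤ ((n - n/2 : ℕ) : ℝ) * ((n/2 : ℕ) : ℝ) * v := mul_le_mul_of_nonneg_right key hv

lemma lowerLB {n : ℕ} (hn : 3 ≤ n) (c : Fin n → Fin n → ℝ) (v : ℝ)
    (hd : ∀ p, c p p = v) (hT : 0 ≤ Vc c Finset.univ) :
    ∃ K : Finset (Fin n), vstar n v ≤ Vc c K := by
  classical
  by_contra hcon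
  push_neg at hcon
  set k : ℕ := n - n/2 with hk
  have hkn : k ≤ n := by omega
  obtain ⟨K₀, -, hK₀⟩ := Finset.exists_subset_card_eq (by
    simpa [Finset.card_univ] using hkn : k ≤ (Finset.univ : Finset (Fin n)).card)
  have havg := sum_perm_Vc c v hd K₀
  set N : ℝ := (Fintype.card (Equiv.Perm (Fin n)) : ℝ) with hN
  have hNpos : (0:ℝ) < N := by
    simp only [hN]
    exact_mod_cast Fintype.card_pos
  have hsumlt : ∑ π : Equiv.Perm (Fin n), Vc c (K₀.image π) < N * vstar n v := by
    have := Finset.sum_lt_sum_of_nonempty (Finset.univ_nonempty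
      (α := Equiv.Perm (Fin n))) (fun π _ => hcon (K₀.image π))
    simpa [Finset.sum_const, Finset.card_univ, nsmul_eq_mul, hN] using this
  -- arithmetic
  have hn1 : (1:ℝ) < (n:ℝ) := by exact_mod_cast by omega
  have hnn : (0:ℝ) < (n:ℝ) * ((n:ℝ) - 1) := by nlinarith
  have hkcard : (K₀.card : ℝ) = (k:ℕ) := Nat.cast_inj.mpr hK₀
  have hknk : ((k:ℕ):ℝ) * ((n:ℝ) - ((k:ℕ):ℝ)) = ((n - n/2 : ℕ):ℝ) * ((n/2 : ℕ):ℝ) := by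
    have h1 : ((k:ℕ):ℝ) = ((n - n/2 : ℕ):ℝ) := by rw [hk]
    have h2 : (n:ℝ) - ((k:ℕ):ℝ) = ((n/2 : ℕ):ℝ) := by
      rw [hk]
      push_cast [Nat.cast_sub (Nat.div_le_self n 2)]
      ring
    rw [h1, h2]
  have hvs : vstar n v * ((n:ℝ) - 1) = ((k:ℕ):ℝ) * ((n:ℝ) - ((k:ℕ):ℝ)) * v := by
    unfold vstar
    rw [hknk]
    field_simp
    rw [mul_div_assoc, div_self (by linarith : (n:ℝ)-1 ≠ 0), mul_one]
  have hkk1 : (0:ℝ) ≤ ((k:ℕ):ℝ) * (((k:ℕ):ℝ) - 1) := by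
    have : 1 ≤ k := by omega
    have hk1 : (1:ℝ) ≤ ((k:ℕ):ℝ) := by exact_mod_cast this
    nlinarith
  rw [hkcard] at havg
  -- havg : n(n-1) * S = N * (n(n-1) k v + k(k-1)(T - n v))
  -- S < N * vstar; T ≥ 0
  nlinarith [mul_lt_mul_of_pos_left hsumlt hnn, mul_nonneg hkk1 hT,
    mul_pos hNpos hnn, mul_nonneg (le_of_lt hNpos) (mul_nonneg hkk1 hT)]

lemma exists_perm_image {α : Type*} [Fintype α] [DecidableEq α] {s t : Finset α}
    (h : s.card = t.card) : ∃ π : Equiv.Perm α, s.image π = t := by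
  classical
  have h2 : sᶜ.card = tᶜ.card := by simp [Finset.card_compl, h]
  let e1 : {x // x ∈ s} ≃ {x // x ∈ t} := Finset.equivOfCardEq h
  let e2 : {x // ¬ x ∈ s} ≃ {x // ¬ x ∈ t} :=
    ((Equiv.subtypeEquivRight (fun x => (Finset.mem_compl (s := s)).symm)).trans
      (Finset.equivOfCardEq h2)).trans (Equiv.subtypeEquivRight (fun x => Finset.mem_compl))
  refine ⟨Equiv.subtypeCongr e1 e2, ?_⟩
  apply Finset.eq_of_subset_of_card_le
  · intro y hy
    obtain ⟨x, hx, rfl⟩ := Finset.mem_image.mp hy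
    have : Equiv.subtypeCongr e1 e2 x = (e1 ⟨x, hx⟩ : α) := by
      simp [Equiv.subtypeCongr, hx]
    rw [this]
    exact (e1 ⟨x, hx⟩).2
  · rw [Finset.card_image_of_injective _ (Equiv.injective _), h]

/-- Every subset of the prescribed cardinality attains exactly `vstar`. -/
lemma all_eq_of_le {n : ℕ} (hn : 3 ≤ n) (c : Fin n → Fin n → ℝ) (v : ℝ)
    (hd : ∀ p, c p p = v) (hT : Vc c Finset.univ = 0)
    (hle : ∀ K : Finset (Fin n), Vc c K ≤ vstar n v)
    {A : Finset (Fin n)} (hA : A.card = n - n/2) :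
    Vc c A = vstar n v := by
  classical
  set k : ℕ := n - n/2 with hk
  by_contra hne
  have hAlt : Vc c A < vstar n v := lt_of_le_of_ne (hle A) hne
  obtain ⟨K₀, -, hK₀⟩ := Finset.exists_subset_card_eq (by
    simpa [Finset.card_univ] using (by omega : k ≤ n) :
      k ≤ (Finset.univ : Finset (Fin n)).card)
  obtain ⟨π₀, hπ₀⟩ := exists_perm_image (s := K₀) (t := A) (by rw [hK₀, hA])
  set N : ℝ := (Fintype.card (Equiv.Perm (Fin n)) : ℝ) with hN
  have hNpos : (0:ℝ) < N := by
    simp only [hN]; exact_mod_cast Fintype.card_pos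
  have hsumlt : ∑ π : Equiv.Perm (Fin n), Vc c (K₀.image ⇑π) < N * vstar n v := by
    have hlt' : Vc c (K₀.image ⇑π₀) < vstar n v := by rw [hπ₀]; exact hAlt
    have := Finset.sum_lt_sum (f := fun π : Equiv.Perm (Fin n) => Vc c (K₀.image ⇑π))
      (g := fun _ => vstar n v) (fun π _ => hle _) ⟨π₀, Finset.mem_univ π₀, hlt'⟩
    simpa [Finset.sum_const, Finset.card_univ, nsmul_eq_mul, hN] using this
  have havg := sum_perm_Vc c v hd K₀
  rw [hT, hK₀] at havg
  have hn1 : (1:ℝ) < (n:ℝ) := by exact_mod_cast by omega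
  have hnn : (0:ℝ) < (n:ℝ) * ((n:ℝ) - 1) := by nlinarith
  -- havg : n(n-1) * S = N * (n(n-1) k v + k(k-1)(0 - n v))
  have hvs : (n:ℝ) * ((n:ℝ)-1) * vstar n v
      = (n:ℝ) * (k:ℝ) * ((n:ℝ) - (k:ℝ)) * v := by
    unfold vstar
    have h2 : (n:ℝ) - ((k:ℕ):ℝ) = ((n/2 : ℕ):ℝ) := by
      rw [hk]; push_cast [Nat.cast_sub (Nat.div_le_self n 2)]; ring
    have h3 : ((n - n/2 : ℕ):ℝ) = ((k:ℕ):ℝ) := by rw [hk]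
    rw [h3, ← h2]
    have hne1 : (n:ℝ) - 1 ≠ 0 := by linarith
    field_simp
  -- identity: n(n-1) k v + k(k-1)(-n v) = n k (n-k) v
  have hkr : ((k:ℕ):ℝ) ≤ (n:ℝ) := by exact_mod_cast (by omega : k ≤ n)
  have hid : (n:ℝ) * ((n:ℝ)-1) * (k:ℝ) * v + (k:ℝ) * ((k:ℝ) - 1) * (0 - (n:ℝ) * v)
      = (n:ℝ) * (k:ℝ) * ((n:ℝ) - (k:ℝ)) * v := by ring
  rw [hid] at havg
  nlinarith [mul_lt_mul_of_pos_left hsumlt hnn]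

lemma Vc_insert {n : ℕ} (c : Fin n → Fin n → ℝ) (hsym : ∀ p q, c p q = c q p)
    {x : Fin n} {B : Finset (Fin n)} (hx : x ∉ B) :
    Vc c (insert x B) = c x x + 2 * (∑ m ∈ B, c x m) + Vc c B := by
  unfold Vc
  rw [Finset.sum_insert hx, Finset.sum_insert hx]
  rw [Finset.sum_congr rfl (fun i (_ : i ∈ B) => Finset.sum_insert hx)]
  rw [Finset.sum_add_distrib]
  rw [Finset.sum_congr rfl (fun i (_ : i ∈ B) => hsym i x)]
  ring

/-- extraction of the covariance structure from minimality, case `n ≥ 4` -/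
lemma extract_entries {n : ℕ} (hn4 : 4 ≤ n) (c : Fin n → Fin n → ℝ) (v : ℝ)
    (hd : ∀ p, c p p = v) (hsym : ∀ p q, c p q = c q p)
    (hT : Vc c Finset.univ = 0)
    (hle : ∀ K : Finset (Fin n), Vc c K ≤ vstar n v) :
    ∀ a b : Fin n, a ≠ b → ∀ p : Fin n, a ≠ p → b ≠ p → c a p = c b p := by
  classical
  intro a b hab p hap hbp
  set k : ℕ := n - n/2 with hk
  have hk2 : 2 ≤ k := by omega
  have hkn2 : k ≤ n - 2 := by omega
  -- swap sums
  have hswap : ∀ B : Finset (Fin n), B.card = k - 1 → a ∉ B → b ∉ B →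
      ∑ m ∈ B, c a m = ∑ m ∈ B, c b m := by
    intro B hB haB hbB
    have hcard : ∀ x : Fin n, x ∉ B → (insert x B).card = k := by
      intro x hx
      rw [Finset.card_insert_of_notMem hx, hB]
      omega
    have h1 : Vc c (insert a B) = vstar n v :=
      all_eq_of_le (by omega) c v hd hT hle (by rw [hcard a haB, hk])
    have h2 : Vc c (insert b B) = vstar n v :=
      all_eq_of_le (by omega) c v hd hT hle (by rw [hcard b hbB, hk])
    have e1 := Vc_insert c hsym haB
    have e2 := Vc_insert c hsym hbB
    rw [h1, hd] at e1
    rw [h2, hd] at e2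
    linarith
  -- the difference function is constant, hence zero
  set U : Finset (Fin n) := (Finset.univ.erase a).erase b with hU
  have hUcard : U.card = n - 2 := by
    have hbmem : b ∈ Finset.univ.erase a := Finset.mem_erase.mpr ⟨hab.symm, Finset.mem_univ b⟩
    rw [hU, Finset.card_erase_of_mem hbmem, Finset.card_erase_of_mem (Finset.mem_univ a),
      Finset.card_univ, Fintype.card_fin]
    omega
  have hmemU : ∀ x : Fin n, x ≠ a → x ≠ b → x ∈ U := by
    intro x hxa hxb
    exact Finset.mem_erase.mpr ⟨hxb, Finset.mem_erase.mpr ⟨hxa, Finset.mem_univ x⟩⟩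
  have haU : a ∉ U := fun h => ((Finset.mem_erase.mp h).2 |> Finset.mem_erase.mp).1 rfl
  have hbU : b ∉ U := fun h => (Finset.mem_erase.mp h).1 rfl
  have hsum0 : ∀ B ⊆ U, B.card = k - 1 → ∑ m ∈ B, (c a m - c b m) = 0 := by
    intro B hBU hB
    rw [Finset.sum_sub_distrib, hswap B hB (fun h => haU (hBU h)) (fun h => hbU (hBU h))]
    ring
  -- all values of d on U are equal
  have hpair : ∀ x ∈ U, ∀ y ∈ U, x ≠ y → c a x - c b x = c a y - c b y := by
    intro x hx y hy hxy
    obtain ⟨t, ht, htcard⟩ := Finset.exists_subset_card_eq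
      (show k - 2 ≤ ((U.erase x).erase y).card by
        rw [Finset.card_erase_of_mem (Finset.mem_erase.mpr ⟨hxy.symm, hy⟩),
          Finset.card_erase_of_mem hx, hUcard]
        omega)
    have htU : t ⊆ U := fun z hz => Finset.mem_erase.mp (Finset.mem_erase.mp (ht hz)).2 |>.2
    have hxt : x ∉ t := fun h => (Finset.mem_erase.mp (Finset.mem_erase.mp (ht h)).2).1 rfl
    have hyt : y ∉ t := fun h => (Finset.mem_erase.mp (ht h)).1 rfl
    have hBx := hsum0 (insert x t) (Finset.insert_subset hx htU)
      (by rw [Finset.card_insert_of_notMem hxt, htcard]; omega)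
    have hBy := hsum0 (insert y t) (Finset.insert_subset hy htU)
      (by rw [Finset.card_insert_of_notMem hyt, htcard]; omega)
    rw [Finset.sum_insert hxt] at hBx
    rw [Finset.sum_insert hyt] at hBy
    linarith
  -- each value is zero
  have hzero : ∀ x ∈ U, c a x - c b x = 0 := by
    intro x hx
    obtain ⟨B, hBU, hBcard⟩ := Finset.exists_subset_card_eq
      (show k - 1 ≤ U.card by rw [hUcard]; omega)
    have hBne : B.Nonempty := Finset.card_pos.mp (by omega)
    have hconst : ∀ m ∈ B, c a m - c b m = c a x - c b x := by
      intro m hm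
      by_cases hmx : m = x
      · rw [hmx]
      · exact hpair m (hBU hm) x hx hmx
    have := hsum0 B hBU hBcard
    rw [Finset.sum_congr rfl hconst, Finset.sum_const, nsmul_eq_mul, hBcard] at this
    have hkpos : (0:ℝ) < ((k-1 : ℕ) : ℝ) := by
      exact_mod_cast (by omega : 0 < k - 1)
    have := mul_eq_zero.mp this
    rcases this with h | h
    · exact absurd h (ne_of_gt hkpos)
    · exact h
  have := hzero p (hmemU p (Ne.symm hap) (Ne.symm hbp))
  linarith

lemma extract_main {n : ℕ} (hn : 3 ≤ n) (c : Fin n → Fin n → ℝ) (v : ℝ)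
    (hd : ∀ p, c p p = v) (hsym : ∀ p q, c p q = c q p)
    (hT0 : 0 ≤ Vc c Finset.univ)
    (hle : ∀ K : Finset (Fin n), Vc c K ≤ vstar n v) :
    Vc c Finset.univ = 0 ∧ ∀ i j : Fin n, i ≠ j → c i j = -v / ((n:ℝ)-1) := by
  classical
  set k : ℕ := n - n/2 with hk
  have hk2 : 2 ≤ k := by omega
  have hn1 : (1:ℝ) < (n:ℝ) := by exact_mod_cast by omega
  have hnn : (0:ℝ) < (n:ℝ) * ((n:ℝ) - 1) := by nlinarith
  -- step 1 : total sum is zero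
  obtain ⟨K₀, -, hK₀⟩ := Finset.exists_subset_card_eq (by
    simpa [Finset.card_univ] using (by omega : k ≤ n) :
      k ≤ (Finset.univ : Finset (Fin n)).card)
  set N : ℝ := (Fintype.card (Equiv.Perm (Fin n)) : ℝ) with hN
  have hNpos : (0:ℝ) < N := by
    simp only [hN]; exact_mod_cast Fintype.card_pos
  have havg := sum_perm_Vc c v hd K₀
  rw [hK₀] at havg
  have hsumle : ∑ π : Equiv.Perm (Fin n), Vc c (K₀.image ⇑π) ≤ N * vstar n v := by
    have := Finset.sum_le_card_nsmul (Finset.univ : Finset (Equiv.Perm (Fin n)))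
      (fun π => Vc c (K₀.image ⇑π)) (vstar n v) (fun π _ => hle _)
    simpa [Finset.card_univ, nsmul_eq_mul, hN] using this
  have hvs : (n:ℝ) * ((n:ℝ)-1) * vstar n v = (n:ℝ) * (k:ℝ) * ((n:ℝ) - (k:ℝ)) * v := by
    unfold vstar
    have h2 : (n:ℝ) - ((k:ℕ):ℝ) = ((n/2 : ℕ):ℝ) := by
      rw [hk]; push_cast [Nat.cast_sub (Nat.div_le_self n 2)]; ring
    have h3 : ((n - n/2 : ℕ):ℝ) = ((k:ℕ):ℝ) := by rw [hk]
    rw [h3, ← h2]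
    have hne1 : (n:ℝ) - 1 ≠ 0 := by linarith
    field_simp
  have hkk : (0:ℝ) < (k:ℝ) * ((k:ℝ) - 1) := by
    have : (2:ℝ) ≤ (k:ℝ) := by exact_mod_cast hk2
    nlinarith
  have hTle : Vc c Finset.univ ≤ 0 := by
    nlinarith [mul_le_mul_of_nonneg_left hsumle (le_of_lt hnn), mul_pos hNpos hkk]
  have hTeq : Vc c Finset.univ = 0 := le_antisymm hTle hT0
  refine ⟨hTeq, ?_⟩
  by_cases hn4 : 4 ≤ n
  · -- case n ≥ 4 : use the swapping argument
    intro i j hij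
    have hE := extract_entries hn4 c v hd hsym hTeq hle
    have row : ∀ b : Fin n, b ≠ i → c i b = c i j := by
      intro b hbi
      by_cases hbj : b = j
      · rw [hbj]
      · have := hE b j hbj i hbi (Ne.symm hij)
        rw [hsym i b, this, hsym j i]
    have hall : ∀ a b : Fin n, a ≠ b → c a b = c i j := by
      intro a b hab
      by_cases hai : a = i
      · rw [hai]
        exact row b (show b ≠ i by rw [← hai]; exact Ne.symm hab)
      · by_cases hbi : b = i
        · rw [hbi, hsym a i]
          exact row a hai
        · have h1 := hE a i hai b hab (Ne.symm hbi)
          rw [h1]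
          exact row b hbi
    have hrow : ∀ p : Fin n, ∑ q : Fin n, c p q = v + ((n:ℝ)-1) * c i j := by
      intro p
      rw [← Finset.add_sum_erase _ _ (Finset.mem_univ p), hd]
      have : ∀ q ∈ Finset.univ.erase p, c p q = c i j := by
        intro q hq
        exact hall p q (Finset.ne_of_mem_erase hq).symm
      rw [Finset.sum_congr rfl this, Finset.sum_const,
        Finset.card_erase_of_mem (Finset.mem_univ p), nsmul_eq_mul,
        Finset.card_univ, Fintype.card_fin]
      have : 1 ≤ n := by omega
      push_cast [Nat.cast_sub this]
      ring
    have hTexp : Vc c Finset.univ = (n:ℝ) * (v + ((n:ℝ)-1) * c i j) := by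
      unfold Vc
      rw [Finset.sum_congr rfl (fun p _ => hrow p), Finset.sum_const,
        Finset.card_univ, Fintype.card_fin, nsmul_eq_mul]
    rw [hTeq] at hTexp
    have hnpos : (0:ℝ) < (n:ℝ) := by linarith
    have h5 : v + ((n:ℝ)-1) * c i j = 0 := by
      rcases mul_eq_zero.mp hTexp.symm with h | h
      · exact absurd h (ne_of_gt hnpos)
      · exact h
    have hne1 : (n:ℝ) - 1 ≠ 0 := by linarith
    field_simp
    linarith
  · -- case n = 3
    have hn3 : n = 3 := by omega
    subst hn3
    have hvstar3 : vstar 3 v = v := by norm_num [vstar]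
    have pairbound : ∀ a b : Fin 3, a ≠ b → c a b ≤ -v/2 := by
      intro a b hab
      have h := hle {a, b}
      rw [hvstar3] at h
      have hmem : a ∉ ({b} : Finset (Fin 3)) := by simp [hab]
      have hexp : ∀ x : Fin 3, ∑ y ∈ ({a, b} : Finset (Fin 3)), c x y = c x a + c x b := by
        intro x
        rw [Finset.sum_insert hmem, Finset.sum_singleton]
      have hV : Vc c {a, b} = c a a + c a b + (c b a + c b b) := by
        unfold Vc
        rw [Finset.sum_insert hmem, Finset.sum_singleton, hexp a, hexp b]
      rw [hV, hd, hd, hsym b a] at h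
      linarith
    intro i j hij
    obtain ⟨l, hli, hlj⟩ : ∃ l : Fin 3, l ≠ i ∧ l ≠ j := by
      revert hij
      revert i j
      decide
    have hij' : i ∉ ({j, l} : Finset (Fin 3)) := by simp [hij, Ne.symm hli]
    have hjl : j ∉ ({l} : Finset (Fin 3)) := by simp [Ne.symm hlj]
    have huniv : ({i, j, l} : Finset (Fin 3)) = Finset.univ := by
      apply Finset.eq_univ_of_card
      rw [Finset.card_insert_of_notMem hij', Finset.card_insert_of_notMem hjl,
        Finset.card_singleton]
      simp
    have hexp : ∀ x : Fin 3, ∑ y ∈ ({i, j, l} : Finset (Fin 3)), c x y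
        = c x i + c x j + c x l := by
      intro x
      rw [Finset.sum_insert hij', Finset.sum_insert hjl, Finset.sum_singleton]
      ring
    have hV : Vc c {i, j, l} = (c i i + c i j + c i l) + (c j i + c j j + c j l)
        + (c l i + c l j + c l l) := by
      unfold Vc
      rw [Finset.sum_insert hij', Finset.sum_insert hjl, Finset.sum_singleton,
        hexp i, hexp j, hexp l]
      ring
    rw [huniv, hTeq] at hV
    have b1 := pairbound i l (Ne.symm hli)
    have b2 := pairbound j l (Ne.symm hlj)
    have b3 := pairbound i j hij
    rw [hd, hd, hd, hsym j i, hsym l i, hsym l j] at hV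
    have : ((3:ℕ):ℝ) - 1 = 2 := by norm_num
    rw [this]
    linarith

lemma memL2_coupling {Ω : Type*} [MeasurableSpace Ω] (Q : Measure Ω) {F : Measure ℝ}
    (hF2 : MemLp id 2 F) {g : Ω → ℝ} (hm : Measurable g)
    (hmarg : Measure.map g Q = F) : MemLp g 2 Q := by
  have h : MemLp id 2 (Measure.map g Q) := by rw [hmarg]; exact hF2
  have := (memLp_map_measure_iff (g := (id : ℝ → ℝ)) (f := g)
    aestronglyMeasurable_id hm.aemeasurable).mp h
  simpa [Function.id_comp] using this

lemma mul_integrable {Ω : Type*} [MeasurableSpace Ω] {Q : Measure Ω} {f g : Ω → ℝ}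
    (hf : MemLp f 2 Q) (hg : MemLp g 2 Q) :
    Integrable (fun ω => f ω * g ω) Q := by
  have h := L2.integrable_inner (𝕜 := ℝ) (hf.toLp f) (hg.toLp g)
  apply h.congr
  filter_upwards [hf.coeFn_toLp, hg.coeFn_toLp] with ω h1 h2
  simp [RCLike.inner_apply, h1, h2, mul_comm]

lemma coupling_facts {n : ℕ} {F : Measure ℝ} [IsProbabilityMeasure F]
    (hF2 : MemLp id 2 F) (hmean : ∫ x, x ∂F = 0)
    {Ω : Type*} [MeasurableSpace Ω] (Q : Measure Ω) [IsProbabilityMeasure Q]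
    (Y : Fin n → Ω → ℝ) (hmY : ∀ i, Measurable (Y i))
    (hmarg : ∀ i, Measure.map (Y i) Q = F) :
    (∀ i, ∫ ω, Y i ω ∂Q = 0) ∧
    (∀ i j, Integrable (fun ω => Y i ω * Y j ω) Q) ∧
    (∀ i, ∫ ω, Y i ω * Y i ω ∂Q = variance id F) ∧
    (∀ K : Finset (Fin n), ∫ ω, (∑ i ∈ K, Y i ω)^2 ∂Q
        = Vc (fun i j => ∫ ω, Y i ω * Y j ω ∂Q) K) := by
  have hL2 : ∀ i, MemLp (Y i) 2 Q := fun i => memL2_coupling Q hF2 (hmY i) (hmarg i)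
  have hmul : ∀ i j, Integrable (fun ω => Y i ω * Y j ω) Q :=
    fun i j => mul_integrable (hL2 i) (hL2 j)
  have hmean' : ∀ i, ∫ ω, Y i ω ∂Q = 0 := by
    intro i
    have h := integral_map (μ := Q) (φ := Y i) (hmY i).aemeasurable
      (f := fun y : ℝ => y) aestronglyMeasurable_id
    rw [hmarg i] at h
    rw [← h]
    exact hmean
  have hvarF : variance id F = ∫ x, x^2 ∂F := by
    rw [variance_eq_sub hF2]
    have : ∫ x, (id ^ 2 : ℝ → ℝ) x ∂F = ∫ x, x^2 ∂F := by
      apply integral_congr_ae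
      filter_upwards with x
      simp
    rw [this]
    simp only [id_eq]
    rw [hmean]
    ring
  have hsec : ∀ i, ∫ ω, Y i ω * Y i ω ∂Q = variance id F := by
    intro i
    have h := integral_map (μ := Q) (φ := Y i) (hmY i).aemeasurable
      (f := fun y : ℝ => y^2) (measurable_id.pow_const 2).aestronglyMeasurable
    rw [hmarg i] at h
    have h' : ∫ x, x^2 ∂F = ∫ ω, (Y i ω)^2 ∂Q := by simpa using h
    rw [hvarF, h']
    apply integral_congr_ae
    filter_upwards with ω
    ring
  refine ⟨hmean', hmul, hsec, ?_⟩
  intro K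
  have hexpand : (fun ω => (∑ i ∈ K, Y i ω)^2)
      = fun ω => ∑ i ∈ K, ∑ j ∈ K, Y i ω * Y j ω := by
    funext ω
    rw [sq, Finset.sum_mul_sum]
  rw [hexpand, integral_finset_sum K
    (fun i _ => integrable_finset_sum K (fun j _ => hmul i j))]
  unfold Vc
  exact Finset.sum_congr rfl fun i _ => integral_finset_sum K (fun j _ => hmul i j)

lemma exists_good_coupling {n : ℕ} (hn : 3 ≤ n) (F : Measure ℝ) [IsProbabilityMeasure F]
    (hF2 : MemLp id 2 F) (hmean : ∫ x, x ∂F = 0)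
    (hCM : ∃ (Ω0 : Type) (_ : MeasurableSpace Ω0) (P0 : Measure Ω0)
        (_ : IsProbabilityMeasure P0) (Z : Fin n → Ω0 → ℝ),
      (∀ i, Measurable (Z i)) ∧ (∀ i, Measure.map (Z i) P0 = F) ∧
      ∃ c : ℝ, ∀ᵐ ω ∂P0, ∑ i, Z i ω = c) :
    ∃ Q : Measure (Fin n → ℝ), IsProbabilityMeasure Q ∧
      (∀ i, Measure.map (fun y : Fin n → ℝ => y i) Q = F) ∧
      (∀ K : Finset (Fin n), ∫ y, (∑ i ∈ K, y i)^2 ∂Q ≤ vstar n (variance id F)) := by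
  classical
  obtain ⟨Ω0, m0, P0, hP0, Z, hmZ, hmargZ, c0, hc0⟩ := hCM
  set σ2 : ℝ := variance id F with hσ2
  obtain ⟨hmeanZ, hmulZ, hdZ, hVZ⟩ := coupling_facts hF2 hmean P0 Z hmZ hmargZ
  set z : Fin n → Fin n → ℝ := fun i j => ∫ ω, Z i ω * Z j ω ∂P0 with hz
  -- the constant is zero and the total variance vanishes
  have hc00 : c0 = 0 := by
    have h1 : ∫ ω, (∑ i, Z i ω) ∂P0 = c0 := by
      rw [integral_congr_ae hc0]
      simp
    have h2 : ∫ ω, (∑ i, Z i ω) ∂P0 = 0 := by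
      rw [integral_finset_sum _ (fun i _ => ((memL2_coupling P0 hF2 (hmZ i)
        (hmargZ i)).integrable (by norm_num)))]
      simp [hmeanZ]
    rw [h1] at h2
    exact h2
  have hTz : Vc z Finset.univ = 0 := by
    rw [← hVZ Finset.univ]
    have heq : (fun ω => (∑ i ∈ Finset.univ, Z i ω)^2) =ᵐ[P0] (fun _ => (0:ℝ)) := by
      filter_upwards [hc0] with ω hω
      rw [hω, hc00]
      ring
    rw [integral_congr_ae heq]
    simp
  -- the symmetrized coupling
  set N : ℕ := Fintype.card (Equiv.Perm (Fin n)) with hNdef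
  have hNpos : 0 < N := Fintype.card_pos
  have hNne : (N : ℝ≥0∞) ≠ 0 := by exact_mod_cast hNpos.ne'
  have hNtop : (N : ℝ≥0∞) ≠ ⊤ := ENNReal.natCast_ne_top N
  set Zvec : Equiv.Perm (Fin n) → Ω0 → (Fin n → ℝ) :=
    fun π ω i => Z (π i) ω with hZvec
  have hmZvec : ∀ π, Measurable (Zvec π) :=
    fun π => measurable_pi_iff.mpr fun i => hmZ (π i)
  set Q : Measure (Fin n → ℝ) :=
    (N : ℝ≥0∞)⁻¹ • ∑ π : Equiv.Perm (Fin n), Measure.map (Zvec π) P0 with hQ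
  have hQapp : ∀ s : Set (Fin n → ℝ), MeasurableSet s →
      Q s = (N : ℝ≥0∞)⁻¹ * ∑ π : Equiv.Perm (Fin n), P0 (Zvec π ⁻¹' s) := by
    intro s hs
    rw [hQ, Measure.smul_apply, smul_eq_mul]
    congr 1
    rw [Measure.coe_finset_sum]
    rw [Finset.sum_apply]
    exact Finset.sum_congr rfl fun π _ => Measure.map_apply (hmZvec π) hs
  have hQprob : IsProbabilityMeasure Q := by
    constructor
    rw [hQapp Set.univ MeasurableSet.univ]
    simp only [Set.preimage_univ, measure_univ, Finset.sum_const, Finset.card_univ,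
      nsmul_eq_mul, mul_one]
    rw [← hNdef]
    exact ENNReal.inv_mul_cancel hNne hNtop
  have hmeas_eval : ∀ i : Fin n, Measurable (fun y : Fin n → ℝ => y i) :=
    fun i => measurable_pi_apply i
  have hmargQ : ∀ i, Measure.map (fun y : Fin n → ℝ => y i) Q = F := by
    intro i
    ext s hs
    rw [Measure.map_apply (hmeas_eval i) hs, hQapp _ (hmeas_eval i hs)]
    have hpre : ∀ π : Equiv.Perm (Fin n),
        Zvec π ⁻¹' ((fun y : Fin n → ℝ => y i) ⁻¹' s) = Z (π i) ⁻¹' s := by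
      intro π
      rfl
    have hterm : ∀ π : Equiv.Perm (Fin n), P0 (Zvec π ⁻¹' ((fun y : Fin n → ℝ => y i) ⁻¹' s))
        = F s := by
      intro π
      rw [hpre π, ← Measure.map_apply (hmZ (π i)) hs, hmargZ (π i)]
    rw [Finset.sum_congr rfl fun π _ => hterm π]
    simp only [Finset.sum_const, Finset.card_univ, nsmul_eq_mul]
    rw [← hNdef, ← mul_assoc, ENNReal.inv_mul_cancel hNne hNtop, one_mul]
  -- now covariances of Q
  haveI := hQprob
  obtain ⟨hmeanQ, hmulQ, hdQ, hVQ⟩ := coupling_facts hF2 hmean Q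
    (fun i => fun y : Fin n → ℝ => y i) hmeas_eval hmargQ
  set cQ : Fin n → Fin n → ℝ := fun i j => ∫ y, y i * y j ∂Q with hcQ
  have hn1 : (1:ℝ) < (n:ℝ) := by exact_mod_cast by omega
  have hcQoff : ∀ i j : Fin n, i ≠ j → cQ i j = -σ2 / ((n:ℝ) - 1) := by
    intro i j hij
    have hfmeas : Measurable (fun y : Fin n → ℝ => y i * y j) :=
      (measurable_pi_apply i).mul (measurable_pi_apply j)
    have hint : ∀ π : Equiv.Perm (Fin n),
        Integrable (fun y : Fin n → ℝ => y i * y j) (Measure.map (Zvec π) P0) := by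
      intro π
      rw [integrable_map_measure hfmeas.aestronglyMeasurable (hmZvec π).aemeasurable]
      exact (hmulZ (π i) (π j)).congr (by filter_upwards with ω; rfl)
    have hNR : (0:ℝ) < (N:ℝ) := by exact_mod_cast hNpos
    have hsplit : cQ i j = ((N:ℝ))⁻¹ *
        ∑ π : Equiv.Perm (Fin n), z (π i) (π j) := by
      simp only [hcQ]
      rw [hQ, integral_smul_measure, integral_finset_sum_measure (fun π _ => hint π),
        smul_eq_mul]
      rw [ENNReal.toReal_inv, ENNReal.toReal_natCast]
      congr 1
      refine Finset.sum_congr rfl fun π _ => ?_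
      rw [integral_map (hmZvec π).aemeasurable hfmeas.aestronglyMeasurable]
    have h2 : (N:ℝ) * cQ i j = ∑ π : Equiv.Perm (Fin n), z (π i) (π j) := by
      rw [hsplit, ← mul_assoc, mul_inv_cancel₀ hNR.ne', one_mul]
    have hperm := sum_perm_offdiag z σ2 (fun p => hdZ p) hij
    rw [hTz, ← hNdef] at hperm
    rw [← h2] at hperm
    have hcan : ((N:ℝ) * n) * (((n:ℝ)-1) * cQ i j) = ((N:ℝ) * n) * (-σ2) := by
      ring_nf at hperm ⊢
      linarith [hperm]
    have hfin := mul_left_cancel₀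
      (ne_of_gt (mul_pos hNR (by linarith : (0:ℝ) < (n:ℝ)))) hcan
    rw [eq_div_iff (by linarith : (n:ℝ) - 1 ≠ 0)]
    linarith [hfin]
  have hv : (0:ℝ) ≤ σ2 := variance_nonneg _ _
  have hub := valueUB hn cQ σ2 hv (fun p => hdQ p) hcQoff
  refine ⟨Q, hQprob, hmargQ, fun K => ?_⟩
  have hVK : ∫ y, (∑ i ∈ K, y i)^2 ∂Q = Vc cQ K := hVQ K
  rw [hVK]
  exact hub K


/-- Let `n ≥ 3` and `F` be `n`-completely mixable with mean `0` and finite positive variance.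
A coupling with marginals `F` minimizes `max_{K⊆[n]} E[(∑_{i∈K} X_i)²]` over all couplings
iff it is an NCD joint mix with correlation matrix `P_n*` (all pairwise covariances
equal to `-Var(F)/(n-1)`). -/
theorem stmt12 {n : ℕ} (hn : 3 ≤ n) (F : Measure ℝ) [IsProbabilityMeasure F]
    (hF2 : MemLp id 2 F) (hmean : ∫ x, x ∂F = 0) (hvarpos : 0 < variance id F)
    (hCM : ∃ (Ω0 : Type) (_ : MeasurableSpace Ω0) (P0 : Measure Ω0)
        (_ : IsProbabilityMeasure P0) (Z : Fin n → Ω0 → ℝ),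
      (∀ i, Measurable (Z i)) ∧ (∀ i, Measure.map (Z i) P0 = F) ∧
      ∃ c : ℝ, ∀ᵐ ω ∂P0, ∑ i, Z i ω = c)
    {Ω : Type*} [MeasurableSpace Ω] (P : Measure Ω) [IsProbabilityMeasure P]
    (X : Fin n → Ω → ℝ) (hmX : ∀ i, Measurable (X i))
    (hmarg : ∀ i, Measure.map (X i) P = F) :
    (∀ (Ω' : Type) (m' : MeasurableSpace Ω') (Q : Measure Ω'), IsProbabilityMeasure Q →
        ∀ Y : Fin n → Ω' → ℝ, (∀ i, Measurable (Y i)) →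
        (∀ i, Measure.map (Y i) Q = F) →
        sSup (Set.range fun K : Finset (Fin n) => ∫ ω, (∑ i ∈ K, X i ω) ^ 2 ∂P) ≤
        sSup (Set.range fun K : Finset (Fin n) => ∫ ω', (∑ i ∈ K, Y i ω') ^ 2 ∂Q))
    ↔ ((∃ c : ℝ, ∀ᵐ ω ∂P, ∑ i, X i ω = c) ∧
        ∀ i j, i ≠ j → cov P (X i) (X j) = -(variance id F) / ((n : ℝ) - 1)) := by
  classical
  set σ2 : ℝ := variance id F with hσ2
  obtain ⟨hmeanX, hmulX, hdX, hVX⟩ := coupling_facts hF2 hmean P X hmX hmarg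
  set cX : Fin n → Fin n → ℝ := fun i j => ∫ ω, X i ω * X j ω ∂P with hcX
  have hsymX : ∀ p q, cX p q = cX q p := by
    intro p q
    simp only [hcX]
    simp_rw [mul_comm]
  have hT0X : 0 ≤ Vc cX Finset.univ := by
    rw [← hVX Finset.univ]
    exact integral_nonneg fun ω => sq_nonneg _
  have hbddX : BddAbove (Set.range fun K : Finset (Fin n) =>
      ∫ ω, (∑ i ∈ K, X i ω) ^ 2 ∂P) := (Set.finite_range _).bddAbove
  have hcov' : ∀ i j, cov P (X i) (X j) = cX i j := by
    intro i j
    simp only [cov, hmeanX i, hmeanX j, sub_zero]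
    rfl
  constructor
  · -- minimality implies NCD joint mix with matrix P*
    intro hmin
    obtain ⟨Q, hQprob, hQmarg, hQle⟩ := exists_good_coupling hn F hF2 hmean hCM
    have happ := hmin (Fin n → ℝ) inferInstance Q hQprob (fun i (y : Fin n → ℝ) => y i)
      (fun i => measurable_pi_apply i) hQmarg
    have hMQ : sSup (Set.range fun K : Finset (Fin n) =>
        ∫ y, (∑ i ∈ K, y i) ^ 2 ∂Q) ≤ vstar n σ2 := by
      apply csSup_le (Set.range_nonempty _)
      rintro x ⟨K, rfl⟩
      exact hQle K
    have hMX : ∀ K : Finset (Fin n), Vc cX K ≤ vstar n σ2 := by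
      intro K
      have h1 : (∫ ω, (∑ i ∈ K, X i ω) ^ 2 ∂P) ≤
          sSup (Set.range fun K : Finset (Fin n) => ∫ ω, (∑ i ∈ K, X i ω) ^ 2 ∂P) :=
        le_csSup hbddX ⟨K, rfl⟩
      rw [hVX K] at h1
      exact h1.trans (happ.trans hMQ)
    obtain ⟨hTeq, hoff⟩ := extract_main hn cX σ2 (fun p => hdX p) hsymX hT0X hMX
    constructor
    · refine ⟨0, ?_⟩
      have hint : Integrable (fun ω => (∑ i, X i ω) ^ 2) P := by
        have hexp : (fun ω => (∑ i ∈ Finset.univ, X i ω) ^ 2)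
            = fun ω => ∑ i ∈ Finset.univ, ∑ j ∈ Finset.univ, X i ω * X j ω := by
          funext ω
          rw [sq, Finset.sum_mul_sum]
        rw [show (fun ω => (∑ i, X i ω) ^ 2)
            = fun ω => (∑ i ∈ Finset.univ, X i ω) ^ 2 from rfl, hexp]
        exact integrable_finset_sum _
          (fun i _ => integrable_finset_sum _ (fun j _ => hmulX i j))
      have hzero : ∫ ω, (∑ i, X i ω) ^ 2 ∂P = 0 := by
        rw [show (∫ ω, (∑ i, X i ω) ^ 2 ∂P)
            = ∫ ω, (∑ i ∈ Finset.univ, X i ω) ^ 2 ∂P from rfl, hVX Finset.univ]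
        exact hTeq
      have hae := (integral_eq_zero_iff_of_nonneg (fun ω => sq_nonneg _) hint).mp hzero
      filter_upwards [hae] with ω hω
      have : (∑ i, X i ω) ^ 2 = 0 := hω
      exact pow_eq_zero_iff two_ne_zero |>.mp this
    · intro i j hij
      rw [hcov' i j]
      exact hoff i j hij
  · -- NCD joint mix with matrix P* implies minimality
    rintro ⟨-, hcov⟩ Ω' m' Q hQprob Y hmY hmargY
    haveI := hQprob
    obtain ⟨hmeanY, hmulY, hdY, hVY⟩ := coupling_facts hF2 hmean Q Y hmY hmargY
    set cY : Fin n → Fin n → ℝ := fun i j => ∫ ω', Y i ω' * Y j ω' ∂Q with hcY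
    have hT0Y : 0 ≤ Vc cY Finset.univ := by
      rw [← hVY Finset.univ]
      exact integral_nonneg fun ω => sq_nonneg _
    obtain ⟨K, hK⟩ := lowerLB hn cY σ2 (fun p => hdY p) hT0Y
    have hup : vstar n σ2 ≤ sSup (Set.range fun K : Finset (Fin n) =>
        ∫ ω', (∑ i ∈ K, Y i ω') ^ 2 ∂Q) := by
      refine le_trans ?_ (le_csSup ((Set.finite_range _).bddAbove) ⟨K, rfl⟩)
      dsimp only
      rw [hVY K]
      exact hK
    have hoffX : ∀ i j : Fin n, i ≠ j → cX i j = -σ2 / ((n:ℝ) - 1) := by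
      intro i j hij
      rw [← hcov' i j]
      exact hcov i j hij
    have hdown : sSup (Set.range fun K : Finset (Fin n) =>
        ∫ ω, (∑ i ∈ K, X i ω) ^ 2 ∂P) ≤ vstar n σ2 := by
      apply csSup_le (Set.range_nonempty _)
      rintro x ⟨K, rfl⟩
      dsimp only
      rw [hVX K]
      exact valueUB hn cX σ2 (variance_nonneg _ _) (fun p => hdX p) hoffX K
    exact le_trans hdown hup
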